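/- Let G be a connected graph and M a minimal MEG-set of G (minimal meaning no proper subset of M is a MEG-set). If G has at least 3 vertices, then M contains no vertex that is the unique neighbor of a degree-1 vertex. -/

import Mathlib

open SimpleGraph

/-- A pair `{x, y}` monitors the edge `e` if `e` lies on every shortest path
between `x` and `y` in `G`. -/
def Monitors {V : Type*} (G : SimpleGraph V) (x y : V) (e : Sym2 V) : Prop :=
  ∀ p : G.Walk x y, p.IsPath → p.length = G.dist x y → e ∈ p.edges

/-- `M` is a monitoring edge-geodetic set of `G` if every edge of `G` is
monitored by some pair of vertices of `M`. -/
def IsMEGSet {V : Type*} (G : SimpleGraph V) (M : Set V) : Prop :=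
  ∀ e ∈ G.edgeSet, ∃ x ∈ M, ∃ y ∈ M, Monitors G x y e

section Aux

variable {V : Type*} {G : SimpleGraph V}

lemma aux_exists_cons {u z : V} (w : G.Walk u z) (h : ¬ w.Nil) :
    ∃ a, ∃ ha : G.Adj u a, ∃ w' : G.Walk a z, w = Walk.cons ha w' := by
  cases w with
  | nil => simp at h
  | cons ha w' => exact ⟨_, ha, w', rfl⟩

lemma aux_adj_eq [Fintype V] [DecidableRel G.Adj] {u v w : V}
    (hd : G.degree u = 1) (hv : G.Adj u v) (hw : G.Adj u w) : w = v := by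
  have h1 : v ∈ G.neighborFinset u := (G.mem_neighborFinset u v).mpr hv
  have h2 : w ∈ G.neighborFinset u := (G.mem_neighborFinset u w).mpr hw
  have hcard : (G.neighborFinset u).card ≤ 1 := by
    rw [G.card_neighborFinset_eq_degree, hd]
  exact Finset.card_le_one.mp hcard w h2 v h1

/-- Every non-nil walk out of a degree-one vertex starts with the edge to its
unique neighbor. -/
lemma aux_start_edge [Fintype V] [DecidableRel G.Adj] {u v y : V}
    (hd : G.degree u = 1) (hv : G.Adj u v) (p : G.Walk u y) (hp : ¬ p.Nil) :
    ∃ p' : G.Walk v y, p = Walk.cons hv p' := by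
  obtain ⟨a, ha, w', rfl⟩ := aux_exists_cons p hp
  have hav : a = v := aux_adj_eq hd hv ha
  subst hav
  exact ⟨w', rfl⟩

/-- A path cannot pass through a degree-one vertex as an interior vertex. -/
lemma aux_not_interior [Fintype V] [DecidableRel G.Adj] {u v x y : V}
    (hd : G.degree u = 1) (hv : G.Adj u v) (p : G.Walk x y) (hp : p.IsPath)
    (hu : u ∈ p.support) (hx : x ≠ u) (hy : y ≠ u) : False := by
  classical
  set q := p.takeUntil u hu with hq
  set r := p.dropUntil u hu with hr
  have hspec : q.append r = p := p.take_spec hu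
  -- v is in q.support
  have hvq : v ∈ q.support := by
    have hnil : ¬ q.reverse.Nil := Walk.not_nil_of_ne (Ne.symm hx)
    obtain ⟨q', hq'⟩ := aux_start_edge hd hv q.reverse hnil
    have : v ∈ q.reverse.support := by rw [hq']; simp
    simpa [Walk.support_reverse] using this
  -- v is in r.support.tail
  have hvr : v ∈ r.support.tail := by
    have hnil : ¬ r.Nil := Walk.not_nil_of_ne (Ne.symm hy)
    obtain ⟨r', hr'⟩ := aux_start_edge hd hv r hnil
    rw [hr']
    simp
  have hnodup : (q.append r).support.Nodup := by rw [hspec]; exact hp.support_nodup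
  rw [Walk.support_append] at hnodup
  have hdisj := List.disjoint_of_nodup_append hnodup
  exact hdisj hvq hvr

lemma aux_monitors_symm {x y : V} {e : Sym2 V} (h : Monitors G x y e) :
    Monitors G y x e := by
  intro p hp hl
  have := h p.reverse hp.reverse (by rw [Walk.length_reverse, hl, dist_comm])
  simpa [Walk.edges_reverse] using this

lemma aux_not_monitors_self {u : V} {e : Sym2 V} (h : Monitors G u u e) : False := by
  have := h Walk.nil Walk.IsPath.nil (by simp [dist_self])
  simp at this

lemma aux_monitors_adj {u v : V} {e : Sym2 V} (h : G.Adj u v)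
    (hm : Monitors G u v e) : e = s(u, v) := by
  have hp : (Walk.cons h Walk.nil).IsPath := by
    rw [Walk.cons_isPath_iff]
    exact ⟨Walk.IsPath.nil, by simp [h.ne]⟩
  have hd : G.dist u v = 1 := dist_eq_one_iff_adj.mpr h
  have := hm (Walk.cons h Walk.nil) hp (by simp [hd])
  simpa using this

/-- Transfer the monitoring of a pair `(v, y)` to `(u, y)` where `u` is a
degree-one vertex adjacent to `v`. -/
lemma aux_transfer [Fintype V] [DecidableRel G.Adj] (hG : G.Connected)
    {u v y : V} {e : Sym2 V} (hd : G.degree u = 1) (hv : G.Adj u v) (hy : y ≠ u)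
    (h : Monitors G v y e) : Monitors G u y e := by
  intro p hp hl
  have hnil : ¬ p.Nil := Walk.not_nil_of_ne (Ne.symm hy)
  obtain ⟨p', rfl⟩ := aux_start_edge hd hv p hnil
  have hp' : p'.IsPath := hp.of_cons
  have hd1 : G.dist u v = 1 := dist_eq_one_iff_adj.mpr hv
  have hle : G.dist u y ≤ 1 + G.dist v y := by
    calc G.dist u y ≤ G.dist u v + G.dist v y := hG.dist_triangle
    _ = 1 + G.dist v y := by rw [hd1]
  have hge : G.dist v y ≤ p'.length := G.dist_le p'
  have hlc : (Walk.cons hv p').length = p'.length + 1 := Walk.length_cons hv p'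
  have hlen : p'.length = G.dist v y := by omega
  have := h p' hp' hlen
  rw [Walk.edges_cons]
  exact List.mem_cons_of_mem _ this

end Aux

theorem minimal_megSet_avoids_support {V : Type*} [Fintype V]
    (G : SimpleGraph V) [DecidableRel G.Adj] (hG : G.Connected)
    (hn : 3 ≤ Fintype.card V) (M : Set V) (hM : IsMEGSet G M)
    (hmin : ∀ x ∈ M, ¬ IsMEGSet G (M \ {x})) :
    ∀ u v : V, G.degree u = 1 → G.Adj u v → v ∉ M := by
  intro u v hd hv hvM
  classical
  have huv : u ≠ v := hv.ne
  -- u is in M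
  have huM : u ∈ M := by
    obtain ⟨x, hx, y, hy, hmon⟩ := hM s(u, v) ((G.mem_edgeSet).mpr hv)
    by_cases hxu : x = u
    · exact hxu ▸ hx
    by_cases hyu : y = u
    · exact hyu ▸ hy
    obtain ⟨p, hp, hlen⟩ := hG.exists_path_of_dist x y
    have he : s(u, v) ∈ p.edges := hmon p hp hlen
    have hus : u ∈ p.support := p.fst_mem_support_of_mem_edges he
    exact absurd (aux_not_interior hd hv p hp hus hxu hyu) (by simp)
  -- there is a vertex of M outside {u, v}
  have hw : ∃ w ∈ M, w ≠ u ∧ w ≠ v := by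
    -- find a vertex z outside {u, v}
    have hz : ∃ z : V, z ≠ u ∧ z ≠ v := by
      by_contra hcon
      push_neg at hcon
      have hsub : (Finset.univ : Finset V) ⊆ {u, v} := by
        intro z _
        rcases em (z = u) with h' | h'
        · simp [h']
        · simp [hcon z h']
      have := Finset.card_le_card hsub
      have h2 : ({u, v} : Finset V).card ≤ 2 := Finset.card_insert_le _ _ |>.trans (by simp)
      rw [Finset.card_univ] at this
      omega
    obtain ⟨z, hzu, hzv⟩ := hz
    -- find an edge incident to z
    obtain ⟨p, hp, _⟩ := hG.exists_path_of_dist z u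
    have hnil : ¬ p.Nil := Walk.not_nil_of_ne hzu
    obtain ⟨a, ha, p', rfl⟩ := aux_exists_cons p hnil
    have he' : s(z, a) ∈ G.edgeSet := (G.mem_edgeSet).mpr ha
    have hne : s(z, a) ≠ s(u, v) := by
      intro hcon
      have : z ∈ s(u, v) := by rw [← hcon]; simp
      rcases Sym2.mem_iff.mp this with h | h
      · exact hzu h
      · exact hzv h
    obtain ⟨x, hx, y, hy, hmon⟩ := hM s(z, a) he'
    by_cases hx' : x = u ∨ x = v
    · by_cases hy' : y = u ∨ y = v
      · exfalso
        rcases hx' with rfl | rfl <;> rcases hy' with rfl | rfl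
        · exact aux_not_monitors_self hmon
        · exact hne (aux_monitors_adj hv hmon)
        · exact hne (aux_monitors_adj hv (aux_monitors_symm hmon))
        · exact aux_not_monitors_self hmon
      · push_neg at hy'
        exact ⟨y, hy, hy'.1, hy'.2⟩
    · push_neg at hx'
      exact ⟨x, hx, hx'.1, hx'.2⟩
  obtain ⟨w, hwM, hwu, hwv⟩ := hw
  -- M \ {v} is still a MEG-set, contradicting minimality
  apply hmin v hvM
  intro e he
  obtain ⟨x, hx, y, hy, hmon⟩ := hM e he
  -- helper: replace a monitoring pair (v, y) with a pair inside M \ {v}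
  have key : ∀ y' ∈ M, Monitors G v y' e →
      ∃ a ∈ M \ {v}, ∃ b ∈ M \ {v}, Monitors G a b e := by
    intro y' hy'M hmon'
    by_cases hy'v : y' = v
    · subst hy'v
      exact absurd (aux_not_monitors_self hmon') (by simp)
    by_cases hy'u : y' = u
    · -- e = s(v, u); use the pair (u, w)
      rw [hy'u] at hmon'
      have heq : e = s(v, u) := aux_monitors_adj hv.symm hmon'
      have heq2 : e = s(u, v) := by rw [heq]; exact Sym2.eq_swap
      have hmon2 : Monitors G u w e := by
        intro p hp hl
        have hnil : ¬ p.Nil := Walk.not_nil_of_ne (fun h => hwu h.symm)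
        obtain ⟨p', rfl⟩ := aux_start_edge hd hv p hnil
        rw [heq2, Walk.edges_cons]
        exact List.mem_cons_self
      exact ⟨u, ⟨huM, huv⟩, w, ⟨hwM, hwv⟩, hmon2⟩
    · exact ⟨u, ⟨huM, huv⟩, y', ⟨hy'M, hy'v⟩,
        aux_transfer hG hd hv hy'u hmon'⟩
  by_cases hxv : x = v
  · subst hxv
    exact key y hy hmon
  by_cases hyv : y = v
  · subst hyv
    exact key x hx (aux_monitors_symm hmon)
  · exact ⟨x, ⟨hx, hxv⟩, y, ⟨hy, hyv⟩, hmon⟩
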